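/- For every real κ with 1 < κ ≤ 2, the five vectors w_x, w_c, w_f, w_c*, w_z ∈ ℝ⁵ have Gram matrix (with respect to the Lorentzian product, in this order) equal to [[1, −1, −1, 0, 0], [−1, 1, −1, √κ, 0], [−1, −1, 1, 0, 0], [0, √κ, 0, 1, 0], [0, 0, 0, 0, 1]]; this matrix has determinant −4, and in particular the five vectors are linearly independent and form a basis of ℝ⁵. -/

import Mathlib

noncomputable section

/-- The Lorentzian product on ℝ⁵: ⟨u,v⟩ = u₁v₁ + u₂v₂ + u₃v₃ + u₄v₄ − u₅v₅. -/
def lprod5 (u v : Fin 5 → ℝ) : ℝ :=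
  u 0 * v 0 + u 1 * v 1 + u 2 * v 2 + u 3 * v 3 - u 4 * v 4

/-- Inversive coordinates of the blow-ups to ℝ³ of the standard pyramidal disk
packing, its mirror and tangency disks, and the half-space `{z ≥ 0}`. -/
def wx : Fin 5 → ℝ := ![0, -1, 0, 1, 1]
def wc (κ : ℝ) : Fin 5 → ℝ := ![0, 1 - κ, 0, -1, κ - 1]
def wf (κ : ℝ) : Fin 5 → ℝ := ![2 / Real.sqrt κ, 0, 0, 2 / κ - 1, 2 / κ]
def wmc : Fin 5 → ℝ := ![0, 1, 0, 1, 1]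
def wmf (κ : ℝ) : Fin 5 → ℝ := ![-(2 / Real.sqrt κ), 0, 0, 2 / κ - 1, 2 / κ]
def wcs (κ : ℝ) : Fin 5 → ℝ :=
  ![0, -(Real.sqrt κ / 2), 0, -(1 / Real.sqrt κ), (κ - 2) / (2 * Real.sqrt κ)]
def wt (κ : ℝ) : Fin 5 → ℝ :=
  ![0, -(2 / Real.sqrt (κ ^ 2 + 4)), 0, κ / Real.sqrt (κ ^ 2 + 4), 0]
def wz : Fin 5 → ℝ := ![0, 0, 1, 0, 0]

/-- The family `{w_x, w_c, w_f, w_c*, w_z}`. -/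
def basisFam (κ : ℝ) : Fin 5 → (Fin 5 → ℝ) := ![wx, wc κ, wf κ, wcs κ, wz]

set_option maxHeartbeats 1000000 in
/-- For `1 < κ ≤ 2`, the Gram matrix of `{w_x, w_c, w_f, w_c*, w_z}` with respect
to the Lorentzian product is the stated matrix; it has determinant `−4`, and the
five vectors are linearly independent and form a basis of ℝ⁵. -/
theorem bridge_basis_gram (κ : ℝ) (hκ1 : 1 < κ) (hκ2 : κ ≤ 2) :
    (Matrix.of fun i j => lprod5 (basisFam κ i) (basisFam κ j)) =
      !![1, -1, -1, 0, 0;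
         -1, 1, -1, Real.sqrt κ, 0;
         -1, -1, 1, 0, 0;
         0, Real.sqrt κ, 0, 1, 0;
         0, 0, 0, 0, 1] ∧
    (!![(1 : ℝ), -1, -1, 0, 0;
        -1, 1, -1, Real.sqrt κ, 0;
        -1, -1, 1, 0, 0;
        0, Real.sqrt κ, 0, 1, 0;
        0, 0, 0, 0, 1]).det = -4 ∧
    LinearIndependent ℝ (basisFam κ) ∧
    Submodule.span ℝ (Set.range (basisFam κ)) = ⊤ := by
  have hκ0 : (0 : ℝ) < κ := by linarith
  have hs0 : 0 < Real.sqrt κ := Real.sqrt_pos.mpr hκ0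
  have hsne : Real.sqrt κ ≠ 0 := ne_of_gt hs0
  have hκs : κ = Real.sqrt κ ^ 2 := (Real.sq_sqrt hκ0.le).symm
  set s := Real.sqrt κ with hs
  clear_value s
  clear hs
  subst hκs
  have hsq : Real.sqrt (s ^ 2) = s := by
    rw [Real.sqrt_sq hs0.le]
  have hLI : LinearIndependent ℝ (basisFam (s ^ 2)) := by
    have hdet : (Matrix.of (basisFam (s ^ 2))).det = -2 := by
      simp only [basisFam, wx, wc, wf, wcs, wz, hsq]
      rw [show (Matrix.of
          ![![0, -1, 0, 1, 1], ![0, 1 - s ^ 2, 0, -1, s ^ 2 - 1],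
            ![2 / s, 0, 0, 2 / s ^ 2 - 1, 2 / s ^ 2], ![0, -(s / 2), 0, -(1 / s),
            (s ^ 2 - 2) / (2 * s)], ![0, 0, 1, 0, 0]]) =
        !![0, -1, 0, 1, 1; 0, 1 - s ^ 2, 0, -1, s ^ 2 - 1;
           2 / s, 0, 0, 2 / s ^ 2 - 1, 2 / s ^ 2; 0, -(s / 2), 0, -(1 / s),
           (s ^ 2 - 2) / (2 * s); 0, 0, 1, 0, 0] from by
        ext i j; fin_cases i <;> fin_cases j <;> rfl]
      rw [Matrix.det_succ_row_zero]
      simp [Fin.sum_univ_succ, Matrix.det_succ_row_zero, Fin.succAbove]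
      field_simp
      ring
    have hU : IsUnit (Matrix.of (basisFam (s ^ 2))) := by
      rw [Matrix.isUnit_iff_isUnit_det, hdet]
      exact isUnit_iff_ne_zero.mpr (by norm_num)
    exact Matrix.linearIndependent_rows_iff_isUnit.mpr hU
  refine ⟨?_, ?_, hLI, ?_⟩
  · ext i j
    fin_cases i <;> fin_cases j <;>
      · norm_num [basisFam, lprod5, wx, wc, wf, wcs, wz, hsq, Matrix.vecHead, Matrix.vecTail,
          Matrix.cons_val_two, Matrix.cons_val_three, Matrix.cons_val_four]
        try field_simp
        try ring
  · rw [Matrix.det_succ_row_zero]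
    simp [Fin.sum_univ_succ, Matrix.det_succ_row_zero, Fin.succAbove]
    ring
  · exact hLI.span_eq_top_of_card_eq_finrank (by simp)
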